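/- Let a be a weak composition and k a positive integer. Then ⋃ KD(b + e_j), taken over all weak compositions b ⪯ a and all 1 ≤ j ≤ k, equals ⋃ KD(supp_a^{(c,j)} + e_j), taken over all pairs (c, j) with 1 ≤ j ≤ k such that (c, j) is an addable cell for a. -/

import Mathlib

attribute [local instance] Classical.propDecidable

/-- A diagram: a set of cells `(column, row)` with positive coordinates. -/
abbrev Diagram : Type := Set (ℕ × ℕ)

/-- The key diagram of a weak composition `a` (parts indexed from 1). -/
def keyDiagram (a : ℕ → ℕ) : Diagram := {p | 1 ≤ p.1 ∧ 1 ≤ p.2 ∧ p.1 ≤ a p.2}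

/-- A single Kohnert move: the rightmost cell of some row drops within its column to
the first unoccupied position below it. -/
def KohnertMove (T S : Diagram) : Prop :=
  ∃ c r r', (c, r) ∈ T ∧ (∀ c', (c', r) ∈ T → c' ≤ c) ∧
    1 ≤ r' ∧ r' < r ∧ (c, r') ∉ T ∧ (∀ s, r' < s → s < r → (c, s) ∈ T) ∧
    S = insert (c, r') (T \ {(c, r)})

/-- The set of Kohnert diagrams of a weak composition. -/
def KD (a : ℕ → ℕ) : Set Diagram :=
  {T | Relation.ReflTransGen KohnertMove (keyDiagram a) T}

/-- Row weight: the number of cells in each row. -/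
noncomputable def rowWeight (T : Diagram) : ℕ → ℕ :=
  fun r => {p : ℕ × ℕ | p ∈ T ∧ p.2 = r}.ncard

/-- Column weight: the number of cells in each column. -/
noncomputable def colWeight (T : Diagram) : ℕ → ℕ :=
  fun c => {p : ℕ × ℕ | p ∈ T ∧ p.1 = c}.ncard

/-- The weak composition with a single part `1` in position `j`. -/
def eComp (j : ℕ) : ℕ → ℕ := fun i => if i = j then 1 else 0

/-- Exchange parts `i` and `j` of a weak composition. -/
def swapParts (a : ℕ → ℕ) (i j : ℕ) : ℕ → ℕ :=
  fun t => if t = i then a j else if t = j then a i else a t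

/-- A single left swap: exchange two parts `a i < a j` with `i < j`. -/
def LSwapStep (a b : ℕ → ℕ) : Prop :=
  ∃ i j, 1 ≤ i ∧ i < j ∧ a i < a j ∧ b = swapParts a i j

/-- Left swap order: `b ⪯ a`. -/
def LswapLE (b a : ℕ → ℕ) : Prop := Relation.ReflTransGen LSwapStep a b

/-- A generic Kohnert diagram: a Kohnert diagram of some weak composition. -/
def GenericKD (T : Diagram) : Prop :=
  ∃ a : ℕ → ℕ, (∃ n, ∀ i, n < i → a i = 0) ∧ T ∈ KD a

/-- The target space `D(a,k)`: union of `KD (b + e j)` over `b ⪯ a` and `1 ≤ j ≤ k`. -/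
def Dset (a : ℕ → ℕ) (k : ℕ) : Set Diagram :=
  {T | ∃ b j, LswapLE b a ∧ 1 ≤ j ∧ j ≤ k ∧ T ∈ KD (b + eComp j)}

/-- `(c,r)` is an addable cell for `a`. -/
def Addable (a : ℕ → ℕ) (c r : ℕ) : Prop :=
  1 ≤ c ∧ 1 ≤ r ∧ a r < c ∧ ∃ s, r ≤ s ∧ a s = c - 1

/-- `(c,r)` is a `k`-addable cell for `a`. -/
def KAddable (a : ℕ → ℕ) (k c r : ℕ) : Prop :=
  1 ≤ c ∧ 1 ≤ r ∧ r ≤ k ∧ a r < c ∧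
    (a r < c - 1 → ∃ l, k < l ∧ a l = c - 1) ∧
    (∀ i, r < i → i ≤ k → a i < a r ∨ c ≤ a i)

/-- Apply the transpositions `t_{r0,r1} t_{r1,r2} ⋯` (rightmost first) to `a`. -/
def applyTranspositions (a : ℕ → ℕ) : List ℕ → (ℕ → ℕ)
  | [] => a
  | [_] => a
  | r0 :: r1 :: rest => swapParts (applyTranspositions a (r1 :: rest)) r0 r1

/-- The increasing chain of row indices `r = r₀ < r₁ < ⋯ < r_q` used to construct
the maximal support composition for `a` at `(c,r)`: at each step, the next index is
the first position carrying the smallest part exceeding the current one and at most `c-1`. -/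
noncomputable def suppChain (a : ℕ → ℕ) (c : ℕ) : ℕ → ℕ → List ℕ
  | 0, r => [r]
  | fuel + 1, r =>
    if (∃ s, r < s ∧ a r < a s ∧ a s ≤ c - 1) then
      r :: suppChain a c fuel (sInf {s | r < s ∧ a r < a s ∧ a s ≤ c - 1})
    else [r]

/-- The maximal support composition for `a` at `(c,r)`. -/
noncomputable def suppComp (a : ℕ → ℕ) (c r : ℕ) : ℕ → ℕ :=
  applyTranspositions a (suppChain a c c r)

/-- The maximal drop composition for `a` in column `c` at the set of rows `R`. -/
noncomputable def dropComp (a : ℕ → ℕ) (c : ℕ) (R : Finset ℕ) : ℕ → ℕ :=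
  applyTranspositions (suppComp a c (sSup (R : Set ℕ))) (R.sort (· ≤ ·))

/-- The key polynomial of a weak composition. -/
noncomputable def keyPoly (a : ℕ → ℕ) : MvPolynomial ℕ ℤ :=
  ∑ᶠ T ∈ KD a, ∏ᶠ i : ℕ, (MvPolynomial.X i : MvPolynomial ℕ ℤ) ^ rowWeight T i

/-- A matching sequence on a diagram `T`: edges `(x, y)` mean `x` (in column `i+1`)
matches to `y` (in column `i`, weakly higher row); every cell outside column 1 is matched,
sources and targets are unique. -/
def IsMatchingSeq (T : Diagram) (M : Set ((ℕ × ℕ) × (ℕ × ℕ))) : Prop :=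
  (∀ p ∈ M, p.1 ∈ T ∧ p.2 ∈ T ∧ 2 ≤ p.1.1 ∧ p.2.1 + 1 = p.1.1 ∧ p.1.2 ≤ p.2.2) ∧
  (∀ x y y' : ℕ × ℕ, (x, y) ∈ M → (x, y') ∈ M → y = y') ∧
  (∀ x x' y : ℕ × ℕ, (x, y) ∈ M → (x', y) ∈ M → x = x') ∧
  (∀ x ∈ T, 2 ≤ x.1 → ∃ y, (x, y) ∈ M)

/-- The anchor weight of a matching sequence: its `i`-th part is the number of cells
on the path of `M` terminating at the column-1 cell in row `i`. -/
noncomputable def anchorWeight (T : Diagram) (M : Set ((ℕ × ℕ) × (ℕ × ℕ))) : ℕ → ℕ :=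
  fun i =>
    {x : ℕ × ℕ | x ∈ T ∧ Relation.ReflTransGen (fun u v => (u, v) ∈ M) x (1, i)}.ncard

/-- `m_T(c,r)`. -/
noncomputable def mval (T : Diagram) (c r : ℕ) : ℤ :=
  ({p : ℕ × ℕ | p ∈ T ∧ p.1 = c - 1 ∧ r ≤ p.2}.ncard : ℤ) -
    ({p : ℕ × ℕ | p ∈ T ∧ p.1 = c ∧ r ≤ p.2}.ncard : ℤ)

/-- One rectification step. -/
noncomputable def rho (T : Diagram) : Diagram :=
  if ∀ c r, 1 < c → 1 ≤ r → 0 ≤ mval T c r then T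
  else
    let c := sInf {c | 1 < c ∧ ∃ r, 1 ≤ r ∧ mval T c r < 0}
    let r := sSup {r | 1 ≤ r ∧ ∀ r', 1 ≤ r' → mval T c r ≤ mval T c r'}
    insert (c - 1, r) (T \ {(c, r)})

/-- Rectification: iterate `rho` until it stabilizes. -/
noncomputable def rectify (T : Diagram) : Diagram :=
  if h : ∃ m, rho^[m + 1] T = rho^[m] T then rho^[h.choose] T else T

/-- Bottom insertion `Δ₁`: add a cell at the leftmost empty position of row 1. -/
noncomputable def bottomInsert (T : Diagram) : Diagram :=
  insert (sInf {i | 1 ≤ i ∧ (i, 1) ∉ T}, 1) T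

/-- Top insertion `Δ∞`: add a cell in row `j` beyond the last occupied column
and rectify. -/
noncomputable def topInsert (T : Diagram) (j : ℕ) : Diagram :=
  rectify (insert (sSup {c | ∃ r, (c, r) ∈ T} + 1, j) T)

/-- `x` is a removable cell of `T`. -/
def Removable (T : Diagram) (x : ℕ × ℕ) : Prop := x ∈ T ∧ GenericKD (T \ {x})

/-- A weak Kohnert diagram: a diagram with a removable cell. -/
def WeakKD (T : Diagram) : Prop := ∃ x, Removable T x

/-- `c` is a removable column of `T`. -/
def IsRemovableCol (T : Diagram) (c : ℕ) : Prop := ∃ x, Removable T x ∧ x.1 = c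

/-- The cells of the thread of `S` starting at the cell in column `j` and row `r`. -/
noncomputable def threadCells (S : Diagram) : ℕ → ℕ → Diagram
  | 0, _ => ∅
  | j + 1, r =>
    insert (j + 1, r)
      (if (∃ s, r ≤ s ∧ (j, s) ∈ S) then
        threadCells S j (sInf {s | r ≤ s ∧ (j, s) ∈ S})
      else ∅)

/-- Extract the first thread of `S`: start at the lowest cell of the rightmost column. -/
noncomputable def extractThread (S : Diagram) : Diagram :=
  threadCells S (sSup {c | ∃ r, (c, r) ∈ S})
    (sInf {r | (sSup {c | ∃ r', (c, r') ∈ S}, r) ∈ S})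

/-- The list of threads of the thread decomposition (with fuel). -/
noncomputable def threadList : ℕ → Diagram → List Diagram
  | 0, _ => []
  | fuel + 1, S =>
    if S = ∅ then [] else extractThread S :: threadList fuel (S \ extractThread S)

/-- The thread weight `θ(T)`: its `i`-th part is the number of cells of the thread
whose column-1 cell lies in row `i`. -/
noncomputable def threadWeight (T : Diagram) : ℕ → ℕ :=
  fun i => ∑ᶠ th ∈ {th : Diagram | th ∈ threadList T.ncard T ∧ (1, i) ∈ th}, th.ncard

/-- The target space `D^(m)(a,k)`. -/
def DsetM (a : ℕ → ℕ) (k m : ℕ) : Set Diagram :=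
  {T | ∃ (bs : ℕ → ℕ → ℕ) (js : ℕ → ℕ),
      LswapLE (bs 0) a ∧
      (∀ i, 1 ≤ i → i ≤ m → 1 ≤ js i ∧ js i ≤ k ∧
        LswapLE (bs i) (bs (i - 1) + eComp (js i))) ∧
      (∀ i i', 1 ≤ i → i < i' → i' ≤ m → bs i (js i) ≠ bs i' (js i')) ∧
      T ∈ KD (bs m)}

/-- The sum of all monomials of degree `m` in `x_1, …, x_k`. -/
noncomputable def hPoly (k m : ℕ) : MvPolynomial ℕ ℤ :=
  ∑ s ∈ (Finset.Icc 1 k).sym m, (Multiset.map MvPolynomial.X s.val).prod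

/-- Semistandard Young tableaux of shape `lam` with entries in `{1, …, n}`,
encoded as `f row col = entry` (0 outside the shape, rows/columns indexed from 1). -/
def IsSSYT (n : ℕ) (lam : ℕ → ℕ) (f : ℕ → ℕ → ℕ) : Prop :=
  (∀ i c, f i c ≠ 0 ↔ (1 ≤ i ∧ 1 ≤ c ∧ c ≤ lam i)) ∧
  (∀ i c, f i c ≤ n) ∧
  (∀ i c, 1 ≤ i → 1 ≤ c → c + 1 ≤ lam i → f i c ≤ f i (c + 1)) ∧
  (∀ i c, 1 ≤ i → 1 ≤ c → c ≤ lam (i + 1) → f i c < f (i + 1) c)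

/-- The column of row `i` at which `x` is inserted by RSK row insertion. -/
noncomputable def bumpCol (f : ℕ → ℕ → ℕ) (i x : ℕ) : ℕ :=
  sInf {c | 1 ≤ c ∧ (f i c = 0 ∨ x < f i c)}

/-- RSK row insertion, with fuel. -/
noncomputable def rskAux : ℕ → (ℕ → ℕ → ℕ) → ℕ → ℕ → (ℕ → ℕ → ℕ)
  | 0, f, _, _ => f
  | fuel + 1, f, i, x =>
    let c := bumpCol f i x
    let y := f i c
    let f' : ℕ → ℕ → ℕ := fun i' c' => if i' = i ∧ c' = c then x else f i' c'
    if y = 0 then f' else rskAux fuel f' (i + 1) y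

/-- RSK row insertion of the entry `x` into a tableau with entries at most `n`. -/
noncomputable def RSKinsert (n : ℕ) (f : ℕ → ℕ → ℕ) (x : ℕ) : ℕ → ℕ → ℕ :=
  rskAux (n + 1) f 1 x

/-- The map `𝔻`: the tableau cell in column `c` with entry `v` becomes the diagram
cell `(c, n + 1 - v)`. -/
def toDiagram (n : ℕ) (f : ℕ → ℕ → ℕ) : Diagram :=
  {p | ∃ i, 1 ≤ i ∧ f i p.1 ≠ 0 ∧ p.2 + f i p.1 = n + 1}

namespace S3


noncomputable def cnt (x : ℕ → ℕ) (t m : ℕ) : ℤ :=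
  ∑ s ∈ Finset.Ioc 0 m, if t ≤ x s then 1 else 0

lemma cnt_zero (x : ℕ → ℕ) (t : ℕ) : cnt x t 0 = 0 := by simp [cnt]

lemma cnt_split (x : ℕ → ℕ) (t : ℕ) {m m' : ℕ} (h : m ≤ m') :
    cnt x t m' = cnt x t m + ∑ s ∈ Finset.Ioc m m', if t ≤ x s then (1:ℤ) else 0 := by
  rw [cnt, cnt, Finset.sum_Ioc_consecutive _ (Nat.zero_le m) h]

lemma cnt_congr {x y : ℕ → ℕ} (t m : ℕ) (h : ∀ s, 0 < s → s ≤ m → x s = y s) :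
    cnt x t m = cnt y t m := by
  refine Finset.sum_congr rfl fun s hs => ?_
  rw [Finset.mem_Ioc] at hs
  rw [h s hs.1 hs.2]

lemma swapParts_left (a : ℕ → ℕ) (i j : ℕ) : swapParts a i j i = a j := by simp [swapParts]

lemma swapParts_right (a : ℕ → ℕ) {i j : ℕ} (hij : i ≠ j) : swapParts a i j j = a i := by
  simp [swapParts, hij.symm]

lemma swapParts_other (a : ℕ → ℕ) {i j s : ℕ} (h1 : s ≠ i) (h2 : s ≠ j) :
    swapParts a i j s = a s := by simp [swapParts, h1, h2]

lemma cnt_swap {x : ℕ → ℕ} {i i' : ℕ} (h0 : 0 < i) (hii : i < i') (hval : x i ≤ x i')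
    (t m : ℕ) :
    cnt (swapParts x i i') t m
      = cnt x t m + if i ≤ m ∧ m < i' ∧ x i < t ∧ t ≤ x i' then 1 else 0 := by
  rcases lt_or_ge m i with hmi | hmi
  · rw [if_neg (by omega), add_zero]
    refine cnt_congr t m fun s hs1 hs2 => ?_
    exact (swapParts_other x (by omega) (by omega))
  rcases lt_or_ge m i' with hmi' | hmi'
  · -- i ≤ m < i'
    have key : ∀ s ∈ Finset.Ioc 0 m, (if t ≤ swapParts x i i' s then (1:ℤ) else 0)
        = (if t ≤ x s then (1:ℤ) else 0) + (if s = i then (if x i < t ∧ t ≤ x i' then (1:ℤ) else 0) else 0) := by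
      intro s hs
      rw [Finset.mem_Ioc] at hs
      rcases eq_or_ne s i with rfl | hsi
      · rw [if_pos rfl, swapParts_left]
        split_ifs <;> omega
      · rw [if_neg hsi, add_zero, swapParts_other x hsi (by omega)]
    rw [cnt, Finset.sum_congr rfl key, Finset.sum_add_distrib, Finset.sum_ite_eq' (Finset.Ioc 0 m)]
    rw [if_pos (Finset.mem_Ioc.2 ⟨h0, hmi⟩)]
    rw [← cnt]
    congr 1
    split_ifs <;> first | rfl | omega
  · -- i' ≤ m : bijection
    rw [if_neg (by omega), add_zero]
    have hswap : ∀ s, swapParts x i i' s = x (Equiv.swap i i' s) := by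
      intro s
      rcases eq_or_ne s i with rfl | h1
      · rw [swapParts_left, Equiv.swap_apply_left]
      rcases eq_or_ne s i' with rfl | h2
      · rw [swapParts_right x (by omega), Equiv.swap_apply_right]
      · rw [swapParts_other x h1 h2, Equiv.swap_apply_of_ne_of_ne h1 h2]
    have h1 : cnt (swapParts x i i') t m
        = ∑ s ∈ Finset.Ioc 0 m, if t ≤ x (Equiv.swap i i' s) then (1:ℤ) else 0 := by
      refine Finset.sum_congr rfl fun s _ => ?_
      rw [hswap]
    rw [h1, cnt]
    have hmem : ∀ s, s ∈ Finset.Ioc 0 m ↔ Equiv.swap i i' s ∈ Finset.Ioc 0 m := by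
      intro s
      rcases eq_or_ne s i with rfl | ha
      · rw [Equiv.swap_apply_left, Finset.mem_Ioc, Finset.mem_Ioc]; omega
      rcases eq_or_ne s i' with rfl | hb
      · rw [Equiv.swap_apply_right, Finset.mem_Ioc, Finset.mem_Ioc]; omega
      · rw [Equiv.swap_apply_of_ne_of_ne ha hb]
    exact Finset.sum_equiv (Equiv.swap i i') hmem (fun s _ => rfl)


lemma cnt_addE {x : ℕ → ℕ} {j : ℕ} (hj : 0 < j) (t m : ℕ) :
    cnt (x + eComp j) t m = cnt x t m + if j ≤ m ∧ t = x j + 1 then 1 else 0 := by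
  have key : ∀ s ∈ Finset.Ioc 0 m, (if t ≤ (x + eComp j) s then (1:ℤ) else 0)
      = (if t ≤ x s then (1:ℤ) else 0) + (if s = j then (if t = x j + 1 then (1:ℤ) else 0) else 0) := by
    intro s hs
    rcases eq_or_ne s j with h | hsj
    · subst h
      have : (x + eComp s) s = x s + 1 := by simp [eComp]
      rw [this, if_pos rfl]
      split_ifs <;> omega
    · have : (x + eComp j) s = x s := by simp [eComp, hsj]
      rw [this, if_neg hsj, add_zero]
  rw [cnt, Finset.sum_congr rfl key, Finset.sum_add_distrib, Finset.sum_ite_eq' (Finset.Ioc 0 m), ← cnt]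
  congr 1
  simp only [Finset.mem_Ioc]
  split_ifs <;> first | rfl | omega

/-- Forward direction of the characterization of the left swap order. -/
lemma lswap_dom {b a : ℕ → ℕ} (h : LswapLE b a) :
    (∀ t m, cnt a t m ≤ cnt b t m) ∧ (∃ M, ∀ t m, M ≤ m → cnt a t m = cnt b t m)
      ∧ b 0 = a 0 := by
  induction h with
  | refl => exact ⟨fun t m => le_refl _, ⟨0, fun t m _ => rfl⟩, rfl⟩
  | tail hab hstep ih =>
    obtain ⟨i, i', h1, hii, hval, rfl⟩ := hstep
    obtain ⟨ihle, ⟨M, ihM⟩, ih0⟩ := ih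
    refine ⟨fun t m => ?_, ⟨max M i', fun t m hm => ?_⟩, ?_⟩
    · rw [cnt_swap h1 hii (le_of_lt hval) t m]
      have := ihle t m
      split_ifs <;> omega
    · rw [cnt_swap h1 hii (le_of_lt hval) t m, if_neg (by omega), add_zero]
      exact ihM t m (by omega)
    · rw [swapParts_other _ (by omega) (by omega)]
      exact ih0

lemma cnt_succ (x : ℕ → ℕ) (t m : ℕ) :
    cnt x t (m+1) = cnt x t m + if t ≤ x (m+1) then 1 else 0 := by
  rw [cnt_split x t (Nat.le_succ m)]
  congr 1
  rw [show Finset.Ioc m (m+1) = {m+1} from Nat.Ioc_succ_singleton m, Finset.sum_singleton]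

lemma cnt_interval (x : ℕ → ℕ) (t : ℕ) {m m' : ℕ} (h : m ≤ m') :
    ∑ s ∈ Finset.Ioc m m', (if t ≤ x s then (1:ℤ) else 0) = cnt x t m' - cnt x t m := by
  rw [cnt_split x t h]; ring

lemma exact_interval (x : ℕ → ℕ) (v : ℕ) {m m' : ℕ} (h : m ≤ m') :
    ∑ s ∈ Finset.Ioc m m', (if x s = v then (1:ℤ) else 0)
      = (cnt x v m' - cnt x v m) - (cnt x (v+1) m' - cnt x (v+1) m) := by
  rw [← cnt_interval x v h, ← cnt_interval x (v+1) h, ← Finset.sum_sub_distrib]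
  refine Finset.sum_congr rfl fun s _ => ?_
  split_ifs <;> omega

lemma exchange_step {a b : ℕ → ℕ} (h0 : b 0 = a 0) (hle : ∀ t m, cnt a t m ≤ cnt b t m)
    {M : ℕ} (hM : ∀ t m, M ≤ m → cnt a t m = cnt b t m) (hab : a ≠ b) :
    ∃ r i', 0 < r ∧ r < i' ∧ i' ≤ M ∧ a r < a i' ∧
      (∀ t m, cnt (swapParts a r i') t m ≤ cnt b t m) ∧
      (∀ t m, M ≤ m → cnt (swapParts a r i') t m = cnt b t m) := by
  have hex : ∃ s, a s ≠ b s := by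
    by_contra h
    push_neg at h
    exact hab (funext h)
  set r := Nat.find hex with hrdef
  have hr : a r ≠ b r := Nat.find_spec hex
  have hmin : ∀ s, s < r → a s = b s := by
    intro s hs
    have := Nat.find_min hex hs
    tauto
  have hr1 : 0 < r := by
    rcases Nat.eq_zero_or_pos r with h | h
    · exfalso; apply hr; rw [h]; exact h0.symm
    · exact h
  obtain ⟨rr, hrr⟩ : ∃ rr, rr + 1 = r := ⟨r - 1, by omega⟩
  have hpre : ∀ t, cnt a t rr = cnt b t rr := fun t =>
    cnt_congr t rr (fun s hs1 hs2 => hmin s (by omega))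
  have hsucc : ∀ x : ℕ → ℕ, ∀ t, cnt x t r = cnt x t rr + if t ≤ x r then (1:ℤ) else 0 := by
    intro x t
    rw [← hrr, cnt_succ]
  have hbr : a r < b r := by
    by_contra h
    push_neg at h
    have h1 := hle (a r) r
    rw [hsucc a (a r), hsucc b (a r), hpre (a r)] at h1
    have : a r ≠ b r := hr
    split_ifs at h1 <;> omega
  have hrM : r ≤ M := by
    by_contra h
    push_neg at h
    have h1 := hM (b r) r (by omega)
    have h2 := hM (b r) rr (by omega)
    rw [hsucc a (b r), hsucc b (b r), h2] at h1
    have h3 := add_left_cancel h1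
    split_ifs at h3 <;> omega
  -- the value b r occurs in a strictly beyond r
  have hcav : cnt a (b r) r = cnt b (b r) r - 1 := by
    rw [hsucc a (b r), hsucc b (b r), hpre (b r), if_neg (by omega), if_pos (le_refl _)]
    ring
  have hcav1 : cnt a (b r + 1) r = cnt b (b r + 1) r := by
    rw [hsucc a _, hsucc b _, hpre _, if_neg (by omega), if_neg (by omega)]
  have hexact : ∑ s ∈ Finset.Ioc r M, (if a s = b r then (1:ℤ) else 0)
      = (∑ s ∈ Finset.Ioc r M, (if b s = b r then (1:ℤ) else 0)) + 1 := by
    rw [exact_interval a (b r) hrM, exact_interval b (b r) hrM, hM _ _ (le_refl M),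
      hM _ _ (le_refl M), hcav, hcav1]
    ring
  have hs0 : ∃ s0, (r < s0 ∧ s0 ≤ M) ∧ a s0 = b r := by
    by_contra h
    push_neg at h
    have : ∑ s ∈ Finset.Ioc r M, (if a s = b r then (1:ℤ) else 0) = 0 := by
      refine Finset.sum_eq_zero fun s hs => ?_
      rw [Finset.mem_Ioc] at hs
      rw [if_neg (h s hs)]
    rw [this] at hexact
    have : (0:ℤ) ≤ ∑ s ∈ Finset.Ioc r M, (if b s = b r then (1:ℤ) else 0) :=
      Finset.sum_nonneg fun s _ => by split_ifs <;> omega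
    omega
  obtain ⟨s0, hs01, hs02⟩ := hs0
  have hS : ∃ s, r < s ∧ a r < a s ∧ a s ≤ b r := ⟨s0, hs01.1, by omega, by omega⟩
  set i' := Nat.find hS with hi'def
  obtain ⟨hi'1, hi'2, hi'3⟩ : r < i' ∧ a r < a i' ∧ a i' ≤ b r := Nat.find_spec hS
  have hi'min : ∀ s, s < i' → r < s → ¬(a r < a s ∧ a s ≤ b r) := by
    intro s hs hrs
    have := Nat.find_min hS hs
    tauto
  have hi'M : i' ≤ M := le_trans (Nat.find_min' hS ⟨hs01.1, by omega, by omega⟩) hs01.2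
  refine ⟨r, i', hr1, hi'1, hi'M, hi'2, ?_, ?_⟩
  · intro t m
    rw [cnt_swap hr1 hi'1 (le_of_lt hi'2) t m]
    split_ifs with hind
    · -- r ≤ m < i', a r < t ≤ a i'
      obtain ⟨hm1, hm2, ht1, ht2⟩ := hind
      have hbm : cnt b t m = cnt b t r + ∑ s ∈ Finset.Ioc r m, (if t ≤ b s then (1:ℤ) else 0) :=
        cnt_split b t hm1
      have ham : cnt a t m = cnt a t r + ∑ s ∈ Finset.Ioc r m, (if t ≤ a s then (1:ℤ) else 0) :=
        cnt_split a t hm1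
      have har : cnt a t r = cnt a t rr := by
        rw [hsucc a t, if_neg (by omega), add_zero]
      have hbrr : cnt b t r = cnt b t rr + 1 := by
        rw [hsucc b t, if_pos (by omega)]
      have hcongA : ∑ s ∈ Finset.Ioc r m, (if t ≤ a s then (1:ℤ) else 0)
          = ∑ s ∈ Finset.Ioc r m, (if b r + 1 ≤ a s then (1:ℤ) else 0) := by
        refine Finset.sum_congr rfl fun s hs => ?_
        rw [Finset.mem_Ioc] at hs
        have hns := hi'min s (by omega) hs.1
        have hiff : (t ≤ a s) ↔ (b r + 1 ≤ a s) := by omega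
        split_ifs <;> omega
      have hleB : ∑ s ∈ Finset.Ioc r m, (if b r + 1 ≤ b s then (1:ℤ) else 0)
          ≤ ∑ s ∈ Finset.Ioc r m, (if t ≤ b s then (1:ℤ) else 0) := by
        refine Finset.sum_le_sum fun s _ => ?_
        split_ifs <;> omega
      have hAint := cnt_interval a (b r + 1) hm1
      have hBint := cnt_interval b (b r + 1) hm1
      have hglob := hle (b r + 1) m
      have hpret := hpre t
      -- assemble
      rw [ham, hbm, har, hbrr, hpret, hcongA]
      have : cnt a (b r + 1) m - cnt a (b r + 1) r ≤ cnt b (b r + 1) m - cnt b (b r + 1) r := by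
        omega
      omega
    · rw [add_zero]
      exact hle t m
  · intro t m hm
    rw [cnt_swap hr1 hi'1 (le_of_lt hi'2) t m, if_neg (by omega), add_zero]
    exact hM t m hm


noncomputable def mu (a b : ℕ → ℕ) (M T : ℕ) : ℤ :=
  ∑ m ∈ Finset.Ioc 0 M, ∑ t ∈ Finset.Ioc 0 T, (cnt b t m - cnt a t m)

lemma mu_nonneg {a b : ℕ → ℕ} (hle : ∀ t m, cnt a t m ≤ cnt b t m) (M T : ℕ) :
    0 ≤ mu a b M T :=
  Finset.sum_nonneg fun m _ => Finset.sum_nonneg fun t _ => by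
    have := hle t m; omega

lemma eq_of_mu_zero {a b : ℕ → ℕ} {M T : ℕ} (h0 : b 0 = a 0)
    (hM : ∀ t m, M ≤ m → cnt a t m = cnt b t m)
    (hT : ∀ s, 0 < s → s ≤ M → a s < T ∧ b s < T)
    (hle : ∀ t m, cnt a t m ≤ cnt b t m)
    (hmu : mu a b M T = 0) : a = b := by
  have hpt : ∀ m ∈ Finset.Ioc 0 M, ∀ t ∈ Finset.Ioc 0 T, cnt b t m - cnt a t m = 0 := by
    intro m hm t ht
    have h1 := (Finset.sum_eq_zero_iff_of_nonneg
      (fun m _ => Finset.sum_nonneg fun t _ => by have := hle t m; omega)).1 hmu m hm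
    exact (Finset.sum_eq_zero_iff_of_nonneg
      (fun t _ => by have := hle t m; omega)).1 h1 t ht
  have hall : ∀ t m, 0 < t → t ≤ T → m ≤ M → cnt a t m = cnt b t m := by
    intro t m ht1 ht2 hmM
    rcases Nat.eq_zero_or_pos m with rfl | hm
    · rw [cnt_zero, cnt_zero]
    · have := hpt m (Finset.mem_Ioc.2 ⟨hm, hmM⟩) t (Finset.mem_Ioc.2 ⟨ht1, ht2⟩)
      omega
  funext s
  rcases Nat.eq_zero_or_pos s with rfl | hs
  · exact h0.symm
  obtain ⟨ss, hss⟩ : ∃ ss, ss + 1 = s := ⟨s - 1, by omega⟩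
  by_cases hsM : s ≤ M
  · have hinc : ∀ t, 0 < t → t ≤ T →
        (if t ≤ a s then (1:ℤ) else 0) = (if t ≤ b s then 1 else 0) := by
      intro t ht1 ht2
      have h1 := hall t s ht1 ht2 hsM
      have h2 := hall t ss ht1 ht2 (by omega)
      rw [← hss, cnt_succ, cnt_succ, h2] at h1
      rw [hss] at h1
      exact add_left_cancel h1
    rcases Nat.lt_trichotomy (a s) (b s) with h | h | h
    · have := hinc (b s) (by omega) (le_of_lt (hT s hs hsM).2)
      split_ifs at this <;> omega
    · exact h
    · have := hinc (a s) (by omega) (le_of_lt (hT s hs hsM).1)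
      split_ifs at this <;> omega
  · have hinc : ∀ t, (if t ≤ a s then (1:ℤ) else 0) = (if t ≤ b s then 1 else 0) := by
      intro t
      have h1 := hM t s (by omega)
      have h2 := hM t ss (by omega)
      rw [← hss, cnt_succ, cnt_succ, h2] at h1
      rw [hss] at h1
      exact add_left_cancel h1
    rcases Nat.lt_trichotomy (a s) (b s) with h | h | h
    · have := hinc (b s)
      split_ifs at this <;> omega
    · exact h
    · have := hinc (a s)
      split_ifs at this <;> omega

lemma dom_lswap_aux : ∀ (N : ℕ) (a b : ℕ → ℕ) (M T : ℕ), b 0 = a 0 →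
    (∀ t m, cnt a t m ≤ cnt b t m) → (∀ t m, M ≤ m → cnt a t m = cnt b t m) →
    (∀ s, 0 < s → s ≤ M → a s < T ∧ b s < T) → mu a b M T ≤ (N:ℤ) →
    Relation.ReflTransGen LSwapStep a b := by
  intro N
  induction N with
  | zero =>
    intro a b M T h0 hle hM hT hmu
    have : mu a b M T = 0 := le_antisymm (by exact_mod_cast hmu) (mu_nonneg hle M T)
    rw [eq_of_mu_zero h0 hM hT hle this]
  | succ N ih =>
    intro a b M T h0 hle hM hT hmu
    by_cases hab : a = b
    · rw [hab]
    obtain ⟨r, i', hr1, hii, hi'M, hval, hle1, hM1⟩ := exchange_step h0 hle hM hab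
    have hrM : r ≤ M := le_trans (le_of_lt hii) hi'M
    have hstep : LSwapStep a (swapParts a r i') := ⟨r, i', hr1, hii, hval, rfl⟩
    have h0' : b 0 = swapParts a r i' 0 := by
      rw [swapParts_other a (by omega) (by omega)]; exact h0
    have hT' : ∀ s, 0 < s → s ≤ M → swapParts a r i' s < T ∧ b s < T := by
      intro s hs1 hs2
      refine ⟨?_, (hT s hs1 hs2).2⟩
      rcases eq_or_ne s r with rfl | h1
      · rw [swapParts_left]; exact (hT i' (by omega) hi'M).1
      rcases eq_or_ne s i' with rfl | h2
      · rw [swapParts_right a (by omega)]; exact (hT r (by omega) hrM).1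
      · rw [swapParts_other a h1 h2]; exact (hT s hs1 hs2).1
    have hform := cnt_swap hr1 hii (le_of_lt hval)
    have hdiff : mu a b M T - mu (swapParts a r i') b M T
        = ∑ m ∈ Finset.Ioc 0 M, ∑ t ∈ Finset.Ioc 0 T,
            (if r ≤ m ∧ m < i' ∧ a r < t ∧ t ≤ a i' then (1:ℤ) else 0) := by
      rw [mu, mu, ← Finset.sum_sub_distrib]
      refine Finset.sum_congr rfl fun m _ => ?_
      rw [← Finset.sum_sub_distrib]
      refine Finset.sum_congr rfl fun t _ => ?_
      rw [hform t m]
      ring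
    have hone : (1:ℤ) ≤ ∑ m ∈ Finset.Ioc 0 M, ∑ t ∈ Finset.Ioc 0 T,
        (if r ≤ m ∧ m < i' ∧ a r < t ∧ t ≤ a i' then (1:ℤ) else 0) := by
      have hmem1 : r ∈ Finset.Ioc 0 M := Finset.mem_Ioc.2 ⟨hr1, hrM⟩
      have hmem2 : a i' ∈ Finset.Ioc 0 T := Finset.mem_Ioc.2 ⟨by omega,
        le_of_lt (hT i' (by omega) hi'M).1⟩
      calc (1:ℤ) = (if r ≤ r ∧ r < i' ∧ a r < a i' ∧ a i' ≤ a i' then (1:ℤ) else 0) := by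
            rw [if_pos ⟨le_refl r, hii, hval, le_refl _⟩]
        _ ≤ ∑ t ∈ Finset.Ioc 0 T, (if r ≤ r ∧ r < i' ∧ a r < t ∧ t ≤ a i' then (1:ℤ) else 0) :=
            Finset.single_le_sum (f := fun t => if r ≤ r ∧ r < i' ∧ a r < t ∧ t ≤ a i' then (1:ℤ) else 0)
              (fun t _ => by split_ifs <;> omega) hmem2
        _ ≤ ∑ m ∈ Finset.Ioc 0 M, ∑ t ∈ Finset.Ioc 0 T,
              (if r ≤ m ∧ m < i' ∧ a r < t ∧ t ≤ a i' then (1:ℤ) else 0) :=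
            Finset.single_le_sum
              (f := fun m => ∑ t ∈ Finset.Ioc 0 T, (if r ≤ m ∧ m < i' ∧ a r < t ∧ t ≤ a i' then (1:ℤ) else 0))
              (fun m _ => Finset.sum_nonneg fun t _ => by split_ifs <;> simp) hmem1
    have hmu1 : mu (swapParts a r i') b M T ≤ (N:ℤ) := by
      have := mu_nonneg hle1 M T
      push_cast at hmu ⊢
      omega
    exact Relation.ReflTransGen.head hstep (ih (swapParts a r i') b M T h0' hle1 hM1 hT' hmu1)

/-- Converse direction of the characterization of the left swap order. -/
lemma dom_lswap {a b : ℕ → ℕ} (h0 : b 0 = a 0)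
    (hle : ∀ t m, cnt a t m ≤ cnt b t m) {M : ℕ}
    (hM : ∀ t m, M ≤ m → cnt a t m = cnt b t m) : LswapLE b a := by
  set T := 1 + Finset.sup (Finset.Ioc 0 M) (fun s => max (a s) (b s)) with hT
  have hTb : ∀ s, 0 < s → s ≤ M → a s < T ∧ b s < T := by
    intro s hs1 hs2
    have h1 := Finset.le_sup (f := fun s => max (a s) (b s)) (Finset.mem_Ioc.2 ⟨hs1, hs2⟩)
    have h2 : a s ≤ max (a s) (b s) := le_max_left _ _
    have h3 : b s ≤ max (a s) (b s) := le_max_right _ _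
    omega
  exact dom_lswap_aux (mu a b M T).toNat a b M T h0 hle hM hTb (Int.self_le_toNat _)


lemma sInf_props {a : ℕ → ℕ} {c r : ℕ} (h : ∃ s, r < s ∧ a r < a s ∧ a s ≤ c - 1) :
    r < sInf {s | r < s ∧ a r < a s ∧ a s ≤ c - 1} ∧
    a r < a (sInf {s | r < s ∧ a r < a s ∧ a s ≤ c - 1}) ∧
    a (sInf {s | r < s ∧ a r < a s ∧ a s ≤ c - 1}) ≤ c - 1 :=
  Nat.sInf_mem (s := {s | r < s ∧ a r < a s ∧ a s ≤ c - 1}) h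

inductive IsChain (a : ℕ → ℕ) (c : ℕ) : ℕ → List ℕ → Prop where
  | base (r : ℕ) (h : ¬ ∃ s, r < s ∧ a r < a s ∧ a s ≤ c - 1) : IsChain a c r [r]
  | step (r : ℕ) (l : List ℕ) (h : ∃ s, r < s ∧ a r < a s ∧ a s ≤ c - 1)
      (hch : IsChain a c (sInf {s | r < s ∧ a r < a s ∧ a s ≤ c - 1}) l) :
      IsChain a c r (r :: l)

lemma suppChain_isChain (a : ℕ → ℕ) (c : ℕ) :
    ∀ fuel r, a r ≤ c - 1 → c - 1 - a r ≤ fuel → IsChain a c r (suppChain a c fuel r) := by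
  intro fuel
  induction fuel with
  | zero =>
    intro r har hfuel
    rw [suppChain]
    exact IsChain.base r (by rintro ⟨s, h1, h2, h3⟩; omega)
  | succ fuel ih =>
    intro r har hfuel
    rw [suppChain]
    split_ifs with h
    · refine IsChain.step r _ h (ih _ ?_ ?_)
      · exact (sInf_props h).2.2
      · obtain ⟨h1, h2, h3⟩ := sInf_props h
        omega
    · exact IsChain.base r h

lemma chain_head {a : ℕ → ℕ} {c r : ℕ} {L : List ℕ} (h : IsChain a c r L) :
    ∃ l, L = r :: l := by
  cases h with
  | base => exact ⟨[], rfl⟩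
  | step r l _ _ => exact ⟨l, rfl⟩

lemma chain_ge {a : ℕ → ℕ} {c r : ℕ} {L : List ℕ} (h : IsChain a c r L) :
    ∀ x ∈ L, r ≤ x := by
  induction h with
  | base r h =>
    intro x hx
    rw [List.mem_singleton] at hx
    omega
  | step r l h hch ih =>
    intro x hx
    rcases List.mem_cons.1 hx with rfl | hx
    · exact le_refl x
    · have h1 := sInf_props h
      have := ih x hx
      exact le_trans (le_of_lt h1.1) this

lemma applyT_not_mem (a : ℕ → ℕ) :
    ∀ (L : List ℕ) (s : ℕ), s ∉ L → applyTranspositions a L s = a s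
  | [], s, _ => rfl
  | [_], s, _ => rfl
  | r0 :: r1 :: rest, s, h => by
    rw [applyTranspositions, swapParts_other _ (by simp at h; tauto) (by simp at h; tauto),
      applyT_not_mem a (r1 :: rest) s (by simp at h ⊢; tauto)]

lemma chain_base_top {a : ℕ → ℕ} {c r : ℕ}
    (h : ¬ ∃ s, r < s ∧ a r < a s ∧ a s ≤ c - 1)
    (hex : ∃ s, r ≤ s ∧ a s = c - 1) (har : a r ≤ c - 1) : a r = c - 1 := by
  obtain ⟨s, hs1, hs2⟩ := hex
  rcases eq_or_lt_of_le hs1 with rfl | hlt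
  · omega
  · push_neg at h
    have := h s hlt
    omega

lemma chain_step_next {a : ℕ → ℕ} {c r : ℕ}
    (h : ∃ s, r < s ∧ a r < a s ∧ a s ≤ c - 1)
    (hex : ∃ s, r ≤ s ∧ a s = c - 1) :
    (∃ s, sInf {s | r < s ∧ a r < a s ∧ a s ≤ c - 1} ≤ s ∧ a s = c - 1) := by
  obtain ⟨s, hs1, hs2⟩ := hex
  have hmem := sInf_props h
  have hrl : a r < c - 1 := by
    obtain ⟨u, hu1, hu2, hu3⟩ := h
    omega
  have hs : r < s := by
    rcases eq_or_lt_of_le hs1 with rfl | h' <;> omega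
  exact ⟨s, Nat.sInf_le ⟨hs, by omega, by omega⟩, hs2⟩

lemma chain_app_head {a : ℕ → ℕ} {c : ℕ} :
    ∀ {r : ℕ} {L : List ℕ}, IsChain a c r L → (∃ s, r ≤ s ∧ a s = c - 1) → a r ≤ c - 1 →
    applyTranspositions a L r = c - 1 := by
  intro r L h
  induction h with
  | base r h =>
    intro hex har
    rw [applyTranspositions]
    exact chain_base_top h hex har
  | step r l h hch ih =>
    intro hex har
    obtain ⟨l', rfl⟩ := chain_head hch
    rw [applyTranspositions, swapParts_left]
    obtain ⟨hm1, hm2, hm3⟩ := sInf_props h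
    exact ih (chain_step_next h hex) (by omega)

lemma chain_lswap {a : ℕ → ℕ} {c : ℕ} :
    ∀ {r : ℕ} {L : List ℕ}, IsChain a c r L → (∃ s, r ≤ s ∧ a s = c - 1) → a r ≤ c - 1 →
    0 < r → LswapLE (applyTranspositions a L) a := by
  intro r L h
  induction h with
  | base r h =>
    intro hex har hr
    rw [applyTranspositions]
    exact Relation.ReflTransGen.refl
  | step r l h hch ih =>
    intro hex har hr
    obtain ⟨l', rfl⟩ := chain_head hch
    rw [applyTranspositions]
    obtain ⟨hm1, hm2, hm3⟩ := sInf_props h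
    set r1 := sInf {s | r < s ∧ a r < a s ∧ a s ≤ c - 1} with hr1
    have hihyp := ih (chain_step_next h hex) (by omega) (by omega)
    refine Relation.ReflTransGen.tail hihyp ?_
    refine ⟨r, r1, by omega, hm1, ?_, rfl⟩
    have h1 : applyTranspositions a (r1 :: l') r = a r := by
      refine applyT_not_mem a _ r ?_
      intro hmm
      have := chain_ge hch r hmm
      omega
    have h2 : applyTranspositions a (r1 :: l') r1 = c - 1 :=
      chain_app_head hch (chain_step_next h hex) (by omega)
    rw [h1, h2]
    omega


def chainVal (a : ℕ → ℕ) : List ℕ → ℕ → ℕ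
  | [], _ => 0
  | [r], _ => a r
  | r :: r1 :: l, m => if m < r1 then a r else chainVal a (r1 :: l) m

lemma chain_last {a : ℕ → ℕ} {c : ℕ} : ∀ {r : ℕ} {L : List ℕ}, IsChain a c r L →
    (∃ s, r ≤ s ∧ a s = c - 1) → a r ≤ c - 1 → a (L.getLastD 0) = c - 1 := by
  intro r L h
  induction h with
  | base r h =>
    intro hex har
    simpa using chain_base_top h hex har
  | step r l h hch ih =>
    intro hex har
    obtain ⟨l', rfl⟩ := chain_head hch
    obtain ⟨hm1, hm2, hm3⟩ := sInf_props h
    rw [List.getLastD_cons, List.getLastD_cons]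
    have := ih (chain_step_next h hex) (by omega)
    rw [List.getLastD_cons] at this
    exact this

lemma chain_last_ge {a : ℕ → ℕ} {c : ℕ} {r : ℕ} {L : List ℕ} (h : IsChain a c r L) :
    r ≤ L.getLastD 0 := by
  obtain ⟨l, rfl⟩ := chain_head h
  refine chain_ge h _ ?_
  rw [List.getLastD_cons]
  exact List.getLastD_mem_cons

lemma chainVal_last {a : ℕ → ℕ} {c : ℕ} : ∀ {r : ℕ} {L : List ℕ}, IsChain a c r L →
    ∀ m, L.getLastD 0 ≤ m → chainVal a L m = a (L.getLastD 0) := by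
  intro r L h
  induction h with
  | base r h => intro m hm; simp [chainVal]
  | step r l h hch ih =>
    intro m hm
    obtain ⟨l', rfl⟩ := chain_head hch
    obtain ⟨hm1, hm2, hm3⟩ := sInf_props h
    have hge := chain_last_ge hch
    rw [List.getLastD_cons, List.getLastD_cons] at hm
    rw [List.getLastD_cons] at hge
    rw [chainVal, if_neg (by omega), List.getLastD_cons, List.getLastD_cons]
    have := ih m (by rw [List.getLastD_cons]; exact hm)
    rwa [List.getLastD_cons] at this

lemma chain_cnt {a : ℕ → ℕ} {c : ℕ} : ∀ {r : ℕ} {L : List ℕ}, IsChain a c r L →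
    (∃ s, r ≤ s ∧ a s = c - 1) → a r ≤ c - 1 → 0 < r →
    ∀ t m, cnt (applyTranspositions a L) t m
      = cnt a t m + if r ≤ m ∧ chainVal a L m < t ∧ t ≤ c - 1 then 1 else 0 := by
  intro r L h
  induction h with
  | base r h =>
    intro hex har hr t m
    have htop := chain_base_top h hex har
    rw [applyTranspositions, chainVal, if_neg (by omega), add_zero]
  | step r l h hch ih =>
    intro hex har hr t m
    obtain ⟨l', rfl⟩ := chain_head hch
    obtain ⟨hm1, hm2, hm3⟩ := sInf_props h
    have h1 : applyTranspositions a (sInf {s | r < s ∧ a r < a s ∧ a s ≤ c - 1} :: l') r = a r := by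
      refine applyT_not_mem a _ r fun hmm => ?_
      have := chain_ge hch r hmm
      omega
    have h2 : applyTranspositions a (sInf {s | r < s ∧ a r < a s ∧ a s ≤ c - 1} :: l')
        (sInf {s | r < s ∧ a r < a s ∧ a s ≤ c - 1}) = c - 1 :=
      chain_app_head hch (chain_step_next h hex) (by omega)
    have hsw := cnt_swap (x := applyTranspositions a (sInf {s | r < s ∧ a r < a s ∧ a s ≤ c - 1} :: l'))
      hr hm1 (by rw [h1, h2]; omega) t m
    rw [h1, h2] at hsw
    rw [applyTranspositions, hsw, ih (chain_step_next h hex) (by omega) (by omega) t m]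
    rw [chainVal]
    rcases lt_or_ge m (sInf {s | r < s ∧ a r < a s ∧ a s ≤ c - 1}) with hmr | hmr
    · rw [if_pos hmr]
      have hind2 : ¬ (sInf {s | r < s ∧ a r < a s ∧ a s ≤ c - 1} ≤ m ∧
          chainVal a (sInf {s | r < s ∧ a r < a s ∧ a s ≤ c - 1} :: l') m < t ∧ t ≤ c - 1) := by
        omega
      rw [if_neg hind2, add_zero]
      split_ifs <;> omega
    · rw [if_neg (not_lt.2 hmr)]
      have hind1 : ¬ (r ≤ m ∧ m < sInf {s | r < s ∧ a r < a s ∧ a s ≤ c - 1} ∧ a r < t ∧ t ≤ c - 1) := by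
        omega
      rw [if_neg hind1, add_zero]
      split_ifs <;> omega


lemma walk (c i : ℕ) (hi : 1 ≤ i) : ∀ r, ∀ T : Diagram, i < r → (c, r) ∈ T →
    (∀ c', (c', r) ∈ T → c' ≤ c) → (c, i) ∉ T →
    (∀ s, i < s → s < r → (c, s) ∉ T → (∀ c', (c', s) ∈ T → c' < c)) →
    Relation.ReflTransGen KohnertMove T (insert (c, i) (T \ {(c, r)})) := by
  intro r
  induction r using Nat.strong_induction_on with
  | _ r ih =>
    intro T hir hmem hright hnotin hint
    set r' := Nat.findGreatest (fun s => i ≤ s ∧ (c, s) ∉ T) (r - 1) with hr'def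
    have hP : i ≤ r' ∧ (c, r') ∉ T :=
      Nat.findGreatest_spec (P := fun s => i ≤ s ∧ (c, s) ∉ T) (n := r - 1) (m := i)
        (by omega) (show i ≤ i ∧ (c, i) ∉ T from ⟨le_refl i, hnotin⟩)
    have hr'le : r' ≤ r - 1 := Nat.findGreatest_le _
    have hbetween : ∀ s, r' < s → s < r → (c, s) ∈ T := by
      intro s hs1 hs2
      by_contra hcs
      exact Nat.findGreatest_is_greatest hs1 (by omega) ⟨by omega, hcs⟩
    have hmove : KohnertMove T (insert (c, r') (T \ {(c, r)})) :=
      ⟨c, r, r', hmem, hright, by omega, by omega, hP.2, hbetween, rfl⟩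
    rcases eq_or_lt_of_le hP.1 with heq | hlt
    · rw [heq]
      exact Relation.ReflTransGen.single hmove
    · -- i < r'
      set T1 : Diagram := insert (c, r') (T \ {(c, r)}) with hT1
      have h1 : (c, r') ∈ T1 := Set.mem_insert _ _
      have h2 : ∀ c', (c', r') ∈ T1 → c' ≤ c := by
        intro c' hc'
        rcases Set.mem_insert_iff.1 hc' with h | h
        · rw [Prod.mk.injEq] at h
          omega
        · exact le_of_lt (hint r' hlt (by omega) hP.2 c' h.1)
      have h3 : (c, i) ∉ T1 := by
        intro hc
        rcases Set.mem_insert_iff.1 hc with h | h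
        · rw [Prod.mk.injEq] at h
          omega
        · exact hnotin h.1
      have h4 : ∀ s, i < s → s < r' → (c, s) ∉ T1 → (∀ c', (c', s) ∈ T1 → c' < c) := by
        intro s hs1 hs2 hcs c' hc'
        have hcsT : (c, s) ∉ T := by
          intro hmm
          exact hcs (Set.mem_insert_of_mem _ ⟨hmm, by
            rw [Set.mem_singleton_iff, Prod.mk.injEq]
            omega⟩)
        rcases Set.mem_insert_iff.1 hc' with h | h
        · rw [Prod.mk.injEq] at h
          omega
        · exact hint s hs1 (by omega) hcsT c' h.1
      have hIH := ih r' (by omega) T1 hlt h1 h2 h3 h4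
      have hsetEq : insert (c, i) (T1 \ {(c, r')}) = insert (c, i) (T \ {(c, r)}) := by
        rw [hT1, Set.insert_diff_self_of_notMem]
        intro hmm
        exact hP.2 hmm.1
      rw [hsetEq] at hIH
      exact Relation.ReflTransGen.head hmove hIH

def midD (a : ℕ → ℕ) (i i' cutoff : ℕ) : Diagram :=
  {p | (p ∈ keyDiagram a ∧ ¬(p.2 = i' ∧ cutoff < p.1)) ∨ (p.2 = i ∧ cutoff < p.1 ∧ p.1 ≤ a i')}

lemma mem_midD {a : ℕ → ℕ} {i i' cutoff x y : ℕ} :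
    ((x, y) ∈ midD a i i' cutoff) ↔
      ((1 ≤ x ∧ 1 ≤ y ∧ x ≤ a y) ∧ ¬(y = i' ∧ cutoff < x)) ∨ (y = i ∧ cutoff < x ∧ x ≤ a i') :=
  Iff.rfl

lemma mem_keyD {a : ℕ → ℕ} {x y : ℕ} :
    ((x, y) ∈ keyDiagram a) ↔ (1 ≤ x ∧ 1 ≤ y ∧ x ≤ a y) := Iff.rfl

lemma midD_top (a : ℕ → ℕ) (i i' : ℕ) (hii : i < i') : midD a i i' (a i') = keyDiagram a := by
  ext ⟨x, y⟩
  rw [mem_midD, mem_keyD]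
  rcases eq_or_ne y i with rfl | hyi
  · omega
  rcases eq_or_ne y i' with rfl | hyi'
  · omega
  · omega

lemma midD_bot (a : ℕ → ℕ) {i i' : ℕ} (hi : 1 ≤ i) (hii : i < i') (hval : a i < a i') :
    midD a i i' (a i) = keyDiagram (swapParts a i i') := by
  ext ⟨x, y⟩
  rw [mem_midD, mem_keyD]
  rcases eq_or_ne y i with rfl | hyi
  · rw [swapParts_left]
    omega
  rcases eq_or_ne y i' with rfl | hyi'
  · rw [swapParts_right a (by omega)]
    omega
  · rw [swapParts_other a hyi hyi']
    omega

lemma midD_step (a : ℕ → ℕ) {i i' : ℕ} (hi : 1 ≤ i) (hii : i < i') (hval : a i < a i')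
    {cutoff : ℕ} (h1 : a i ≤ cutoff) (h2 : cutoff < a i') :
    Relation.ReflTransGen KohnertMove (midD a i i' (cutoff + 1)) (midD a i i' cutoff) := by
  have hmem : (cutoff + 1, i') ∈ midD a i i' (cutoff + 1) := by
    rw [mem_midD]
    omega
  have hright : ∀ c', (c', i') ∈ midD a i i' (cutoff + 1) → c' ≤ cutoff + 1 := by
    intro c' hc'
    rw [mem_midD] at hc'
    omega
  have hnotin : (cutoff + 1, i) ∉ midD a i i' (cutoff + 1) := by
    rw [mem_midD]
    omega
  have hint : ∀ s, i < s → s < i' → (cutoff + 1, s) ∉ midD a i i' (cutoff + 1) →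
      (∀ c', (c', s) ∈ midD a i i' (cutoff + 1) → c' < cutoff + 1) := by
    intro s hs1 hs2 hcs c' hc'
    rw [mem_midD] at hcs hc'
    omega
  have hwalk := walk (cutoff + 1) i hi i' (midD a i i' (cutoff + 1)) hii hmem hright hnotin hint
  have hsetEq : insert (cutoff + 1, i) (midD a i i' (cutoff + 1) \ {(cutoff + 1, i')})
      = midD a i i' cutoff := by
    ext ⟨x, y⟩
    simp only [Set.mem_insert_iff, Set.mem_diff, Set.mem_singleton_iff, Prod.mk.injEq, mem_midD]
    rcases eq_or_ne y i with rfl | hyi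
    · omega
    rcases eq_or_ne y i' with rfl | hyi'
    · omega
    · omega
  rw [hsetEq] at hwalk
  exact hwalk

lemma key_swap (a : ℕ → ℕ) {i i' : ℕ} (hi : 1 ≤ i) (hii : i < i') (hval : a i < a i') :
    Relation.ReflTransGen KohnertMove (keyDiagram a) (keyDiagram (swapParts a i i')) := by
  have haux : ∀ n, n ≤ a i' - a i →
      Relation.ReflTransGen KohnertMove (keyDiagram a) (midD a i i' (a i' - n)) := by
    intro n
    induction n with
    | zero =>
      intro _
      rw [Nat.sub_zero, midD_top a i i' hii]
    | succ n ihn =>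
      intro hn
      have hstep := midD_step a hi hii hval (cutoff := a i' - (n+1)) (by omega) (by omega)
      have : a i' - (n + 1) + 1 = a i' - n := by omega
      rw [this] at hstep
      exact (ihn (by omega)).trans hstep
  have := haux (a i' - a i) (le_refl _)
  rw [show a i' - (a i' - a i) = a i from by omega, midD_bot a hi hii hval] at this
  exact this

lemma kd_key_mem {b a : ℕ → ℕ} (h : LswapLE b a) :
    Relation.ReflTransGen KohnertMove (keyDiagram a) (keyDiagram b) := by
  induction h with
  | refl => exact Relation.ReflTransGen.refl
  | tail hab hstep ihh =>
    obtain ⟨i, i', h1, h2, h3, rfl⟩ := hstep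
    exact ihh.trans (key_swap _ h1 h2 h3)

lemma kd_mono {b a : ℕ → ℕ} (h : LswapLE b a) : KD b ⊆ KD a := fun T hT =>
  (kd_key_mem h).trans hT


lemma key_count {a b : ℕ → ℕ} {c j : ℕ} (hab : ∀ t m, cnt a t m ≤ cnt b t m)
    (hbj : b j + 1 = c) (hj : 0 < j) :
    ∀ {r : ℕ} {L : List ℕ}, IsChain a c r L → a r ≤ c - 1 → 0 < r →
    (∀ t, a r < t → t ≤ c - 1 →
      cnt a t (r-1) + (cnt b c (r-1) - cnt a c (r-1)) + (if j ≤ r-1 then (1:ℤ) else 0)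
        ≤ cnt b t (r-1)) →
    ∀ m t, r ≤ m → m < L.getLastD 0 → chainVal a L m < t → t ≤ c - 1 →
      cnt a t m + (cnt b c m - cnt a c m) + (if j ≤ m then (1:ℤ) else 0) ≤ cnt b t m := by
  intro r L h
  induction h with
  | base r h =>
    intro har hr hanchor m t hm1 hm2 _ _
    have hg : ([r] : List ℕ).getLastD 0 = r := rfl
    rw [hg] at hm2
    omega
  | step r l h hch ih =>
    intro har hr hanchor m t hm1 hm2 hcv ht2
    obtain ⟨l', rfl⟩ := chain_head hch
    obtain ⟨hs1, hs2, hs3⟩ := sInf_props h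
    obtain ⟨rr, hrr⟩ : ∃ rr, rr + 1 = r := ⟨r - 1, by omega⟩
    -- the segment bound, for r ≤ m < r1
    have hseg : ∀ m t, r ≤ m → m < sInf {s | r < s ∧ a r < a s ∧ a s ≤ c - 1} →
        a r < t → t ≤ c - 1 →
        cnt a t m + (cnt b c m - cnt a c m) + (if j ≤ m then (1:ℤ) else 0) ≤ cnt b t m := by
      intro m t hm1 hm2 ht1 ht2
      have hanc := hanchor t ht1 ht2
      rw [show r - 1 = rr from by omega] at hanc
      have hrrm : rr ≤ m := by omega
      have e1 : ∑ s ∈ Finset.Ioc rr m, (if t ≤ a s then (1:ℤ) else 0)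
          = ∑ s ∈ Finset.Ioc rr m, (if c ≤ a s then (1:ℤ) else 0) := by
        refine Finset.sum_congr rfl fun s hs => ?_
        rw [Finset.mem_Ioc] at hs
        rcases eq_or_ne s r with rfl | hsr
        · split_ifs <;> omega
        · have hns : s ∉ {s | r < s ∧ a r < a s ∧ a s ≤ c - 1} :=
            Nat.notMem_of_lt_sInf (by omega)
          simp only [Set.mem_setOf_eq] at hns
          split_ifs <;> omega
      have e2 : ∑ s ∈ Finset.Ioc rr m, (if c ≤ b s then (1:ℤ) else 0)
            + (if j ∈ Finset.Ioc rr m then (1:ℤ) else 0)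
          ≤ ∑ s ∈ Finset.Ioc rr m, (if t ≤ b s then (1:ℤ) else 0) := by
        have hpt : ∀ s ∈ Finset.Ioc rr m,
            (if c ≤ b s then (1:ℤ) else 0) + (if s = j then (1:ℤ) else 0)
              ≤ (if t ≤ b s then (1:ℤ) else 0) := by
          intro s hs
          rcases eq_or_ne s j with rfl | hsj
          · rw [if_pos rfl, if_neg (by omega), if_pos (by omega)]
            norm_num
          · rw [if_neg hsj, add_zero]
            split_ifs <;> omega
        calc ∑ s ∈ Finset.Ioc rr m, (if c ≤ b s then (1:ℤ) else 0)
              + (if j ∈ Finset.Ioc rr m then (1:ℤ) else 0)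
            = ∑ s ∈ Finset.Ioc rr m,
                ((if c ≤ b s then (1:ℤ) else 0) + (if s = j then (1:ℤ) else 0)) := by
              rw [Finset.sum_add_distrib, Finset.sum_ite_eq' (Finset.Ioc rr m)]
          _ ≤ _ := Finset.sum_le_sum hpt
      have i1 := cnt_interval a t hrrm
      have i2 := cnt_interval a c hrrm
      have i3 := cnt_interval b c hrrm
      have i4 := cnt_interval b t hrrm
      simp only [Finset.mem_Ioc] at e2
      have i1' : (∑ s ∈ Finset.Ioc rr m, (if c ≤ a s then (1:ℤ) else 0))
          = cnt a t m - cnt a t rr := by rw [← e1]; exact i1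
      split_ifs at hanc e2 ⊢ <;> omega
    rcases lt_or_ge m (sInf {s | r < s ∧ a r < a s ∧ a s ≤ c - 1}) with hmr | hmr
    · refine hseg m t hm1 hmr ?_ ht2
      rw [chainVal, if_pos hmr] at hcv
      exact hcv
    · have hanchor' : ∀ t, a (sInf {s | r < s ∧ a r < a s ∧ a s ≤ c - 1}) < t → t ≤ c - 1 →
          cnt a t (sInf {s | r < s ∧ a r < a s ∧ a s ≤ c - 1} - 1)
            + (cnt b c (sInf {s | r < s ∧ a r < a s ∧ a s ≤ c - 1} - 1)
               - cnt a c (sInf {s | r < s ∧ a r < a s ∧ a s ≤ c - 1} - 1))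
            + (if j ≤ sInf {s | r < s ∧ a r < a s ∧ a s ≤ c - 1} - 1 then (1:ℤ) else 0)
            ≤ cnt b t (sInf {s | r < s ∧ a r < a s ∧ a s ≤ c - 1} - 1) := by
        intro t' ht1' ht2'
        exact hseg _ t' (by omega) (by omega) (by omega) ht2'
      have hlast : m < (sInf {s | r < s ∧ a r < a s ∧ a s ≤ c - 1} :: l').getLastD 0 := by
        rw [List.getLastD_cons] at hm2 ⊢
        rwa [List.getLastD_cons] at hm2
      have hcv' : chainVal a (sInf {s | r < s ∧ a r < a s ∧ a s ≤ c - 1} :: l') m < t := by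
        rw [chainVal, if_neg (by omega)] at hcv
        exact hcv
      exact ih (by omega) (by omega) hanchor' m t hmr hlast hcv' ht2


lemma main_sub {a b : ℕ → ℕ} (hb : LswapLE b a) {j : ℕ} (hj : 1 ≤ j) :
    ∃ c j0, j0 ≤ j ∧ Addable a c j0 ∧
      LswapLE (b + eComp j) (suppComp a c j0 + eComp j0) := by
  obtain ⟨hle, ⟨M0, hM0⟩, h0⟩ := lswap_dom hb
  set c := b j + 1 with hc
  set m0 := Nat.findGreatest (fun m => cnt b c m ≤ cnt a c m) (j - 1) with hm0def
  set j0 := m0 + 1 with hj0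
  have hm0le : m0 ≤ j - 1 := Nat.findGreatest_le _
  have hm0spec : cnt b c m0 ≤ cnt a c m0 :=
    Nat.findGreatest_spec (P := fun m => cnt b c m ≤ cnt a c m) (n := j - 1) (m := 0)
      (by omega) (by show cnt b c 0 ≤ cnt a c 0; rw [cnt_zero, cnt_zero])
  have hm0eq : cnt a c m0 = cnt b c m0 := le_antisymm (hle c m0) hm0spec
  have hDpos : ∀ m, j0 ≤ m → m ≤ j - 1 → cnt a c m < cnt b c m := by
    intro m h1 h2
    have h3 : ¬ (cnt b c m ≤ cnt a c m) :=
      Nat.findGreatest_is_greatest (P := fun m => cnt b c m ≤ cnt a c m) (by omega) h2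
    omega
  have hj0j : j0 ≤ j := by omega
  have hsucc0 : ∀ x : ℕ → ℕ, ∀ t, cnt x t j0 = cnt x t m0 + if t ≤ x j0 then (1:ℤ) else 0 := by
    intro x t
    rw [hj0, cnt_succ]
  have haj0 : a j0 < c := by
    by_contra hcon
    push_neg at hcon
    have h1 := hsucc0 a c
    have h2 := hsucc0 b c
    rw [if_pos hcon] at h1
    by_cases hbc : c ≤ b j0
    · rw [if_pos hbc] at h2
      rcases eq_or_lt_of_le hj0j with heq | hlt
      · rw [heq] at hbc
        omega
      · have := hDpos j0 (le_refl _) (by omega)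
        omega
    · rw [if_neg hbc] at h2
      have := hle c j0
      omega
  have hex : ∃ s, j0 ≤ s ∧ a s = c - 1 := by
    by_contra hcon
    push_neg at hcon
    set M := max M0 j with hM
    have hm0M : m0 ≤ M := by omega
    have hcm1 : c - 1 + 1 = c := by omega
    have hA := exact_interval a (c - 1) hm0M
    have hB := exact_interval b (c - 1) hm0M
    rw [hcm1] at hA hB
    have hAzero : ∑ s ∈ Finset.Ioc m0 M, (if a s = c - 1 then (1:ℤ) else 0) = 0 := by
      refine Finset.sum_eq_zero fun s hs => ?_
      rw [Finset.mem_Ioc] at hs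
      exact if_neg (hcon s (by omega))
    have hBpos : (1:ℤ) ≤ ∑ s ∈ Finset.Ioc m0 M, (if b s = c - 1 then (1:ℤ) else 0) := by
      have hmem : j ∈ Finset.Ioc m0 M := Finset.mem_Ioc.2 ⟨by omega, by omega⟩
      calc (1:ℤ) = (if b j = c - 1 then (1:ℤ) else 0) := by rw [if_pos (by omega)]
        _ ≤ _ := Finset.single_le_sum
            (f := fun s => if b s = c - 1 then (1:ℤ) else 0)
            (fun s _ => by split_ifs <;> omega) hmem
    have e1 := hM0 (c-1) M (by omega)
    have e2 := hM0 c M (by omega)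
    have e3 := hle (c-1) m0
    omega
  have hadd : Addable a c j0 := ⟨by omega, by omega, haj0, hex⟩
  have har : a j0 ≤ c - 1 := by omega
  have hchain : IsChain a c j0 (suppChain a c c j0) :=
    suppChain_isChain a c c j0 har (by omega)
  set L := suppChain a c c j0 with hLdef
  set y0 := applyTranspositions a L with hy0
  have htop : y0 j0 = c - 1 := chain_app_head hchain hex har
  have hlastv : a (L.getLastD 0) = c - 1 := chain_last hchain hex har
  have hsupp_cnt := chain_cnt hchain hex har (by omega)
  have hcx : ∀ t m, cnt (b + eComp j) t m = cnt b t m + if j ≤ m ∧ t = c then (1:ℤ) else 0 := by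
    intro t m
    rw [cnt_addE (by omega) t m, ← hc]
  have hcy : ∀ t m, cnt (y0 + eComp j0) t m
      = cnt y0 t m + if j0 ≤ m ∧ t = c then (1:ℤ) else 0 := by
    intro t m
    rw [cnt_addE (by omega) t m]
    have hyc : y0 j0 + 1 = c := by omega
    congr 1
    split_ifs <;> first | rfl | omega
  have hmain : ∀ t m, cnt (y0 + eComp j0) t m ≤ cnt (b + eComp j) t m := by
    intro t m
    rw [hcx, hcy, hsupp_cnt t m]
    by_cases htc : t = c
    · subst htc
      rw [if_neg (by omega)]
      by_cases h1 : j0 ≤ m ∧ m < j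
      · have := hDpos m h1.1 (by omega)
        split_ifs <;> omega
      · have := hle c m
        split_ifs <;> omega
    · rw [if_neg (show ¬(j0 ≤ m ∧ t = c) by omega), if_neg (show ¬(j ≤ m ∧ t = c) by omega), add_zero, add_zero]
      by_cases hind : j0 ≤ m ∧ chainVal a L m < t ∧ t ≤ c - 1
      · rw [if_pos hind]
        rcases lt_or_ge m (L.getLastD 0) with hml | hml
        · have hanchor : ∀ t', a j0 < t' → t' ≤ c - 1 →
              cnt a t' (j0-1) + (cnt b c (j0-1) - cnt a c (j0-1))
                + (if j ≤ j0-1 then (1:ℤ) else 0) ≤ cnt b t' (j0-1) := by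
            intro t' ht1 ht2
            rw [show j0 - 1 = m0 from by omega, if_neg (by omega)]
            have := hle t' m0
            omega
          have hk := key_count hle (by omega) (by omega) hchain har (by omega) hanchor
            m t hind.1 hml hind.2.1 hind.2.2
          by_cases hjm : j ≤ m
          · rw [if_pos hjm] at hk
            have := hle c m
            omega
          · rw [if_neg hjm] at hk
            have := hDpos m hind.1 (by omega)
            omega
        · exact absurd hind (by rw [chainVal_last hchain m hml, hlastv]; omega)
      · rw [if_neg hind]
        have := hle t m
        omega
  have hMeq : ∀ t m, max (max M0 (L.getLastD 0)) j ≤ m →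
      cnt (y0 + eComp j0) t m = cnt (b + eComp j) t m := by
    intro t m hm
    rw [hcx, hcy, hsupp_cnt t m, chainVal_last hchain m (by omega), hlastv,
      hM0 t m (by omega), if_neg (by omega)]
    split_ifs <;> omega
  have h00 : (b + eComp j) 0 = (y0 + eComp j0) 0 := by
    have h1 : y0 0 = a 0 := applyT_not_mem a L 0 (fun hm => by
      have := chain_ge hchain 0 hm
      omega)
    have h2 : eComp j 0 = 0 := by simp [eComp]; omega
    have h3 : eComp j0 0 = 0 := by simp [eComp]
    show b 0 + eComp j 0 = y0 0 + eComp j0 0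
    rw [h1, h2, h3, h0]
  have hfinal : LswapLE (b + eComp j) (y0 + eComp j0) := dom_lswap h00 hmain hMeq
  exact ⟨c, j0, hj0j, hadd, hfinal⟩

end S3

/-- `D(a,k)` equals the union over addable cells `(c,j)` with `j ≤ k`. -/
theorem statement3 (n k : ℕ) (a : ℕ → ℕ) (ha : ∀ i, n < i → a i = 0) (hk : 1 ≤ k) :
    Dset a k =
      {T | ∃ c j, j ≤ k ∧ Addable a c j ∧ T ∈ KD (suppComp a c j + eComp j)} := by
  ext T
  simp only [Dset, Set.mem_setOf_eq]
  constructor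
  · rintro ⟨b, j, hb, hj1, hjk, hT⟩
    obtain ⟨c, j0, hj0j, hadd, hls⟩ := S3.main_sub hb hj1
    exact ⟨c, j0, le_trans hj0j hjk, hadd, S3.kd_mono hls hT⟩
  · rintro ⟨c, j, hjk, hadd, hT⟩
    obtain ⟨hc1, hj1, haj, hex⟩ := hadd
    refine ⟨suppComp a c j, j, ?_, hj1, hjk, hT⟩
    exact S3.chain_lswap (S3.suppChain_isChain a c c j (by omega) (by omega)) hex
      (by omega) (by omega)
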